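/- Let p be an odd prime and let a, b ∈ 𝔽_p with a ≠ 0, a ≠ 1, b ≠ 0, b ≠ 1, a·b ≠ 0, a·b ≠ 1. Then (1 − a·b)·γ_p((1 − b)/(1 − a·b)) + (1 − b)·γ_p(a) = (1 − a·b)·γ_p((1 − a)/(1 − a·b)) + (1 − a)·γ_p(b) in 𝔽_p. -/

import Mathlib

def mirimanoff (p : ℕ) (t : ZMod p) : ZMod p :=
  ∑ j ∈ Finset.Icc 1 (p - 1), (j : ZMod p)⁻¹ * t ^ j

namespace MirAux

set_option linter.unusedSectionVars false

variable (p : ℕ) [hp : Fact p.Prime]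

/-- Integer "additive Fermat quotient" numerator divided by p. -/
def Qi (x y : ℤ) : ℤ := ((x + y) ^ p - x ^ p - y ^ p) / p

lemma hp0 : (p : ℤ) ≠ 0 := by exact_mod_cast hp.out.ne_zero

lemma dvd_aux (x y : ℤ) : (p : ℤ) ∣ (x + y) ^ p - x ^ p - y ^ p := by
  have h : (((x + y) ^ p - x ^ p - y ^ p : ℤ) : ZMod p) = 0 := by
    push_cast
    rw [add_pow_char]
    ring
  exact_mod_cast (ZMod.intCast_zmod_eq_zero_iff_dvd _ _).mp h

lemma pQ (x y : ℤ) : (p : ℤ) * Qi p x y = (x + y) ^ p - x ^ p - y ^ p :=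
  Int.mul_ediv_cancel' (dvd_aux p x y)

lemma Qi_symm (x y : ℤ) : Qi p x y = Qi p y x := by
  unfold Qi; rw [add_comm]; ring_nf

lemma Qi_cocycle (x y z : ℤ) :
    Qi p x y + Qi p (x + y) z = Qi p y z + Qi p x (y + z) := by
  apply mul_left_cancel₀ (hp0 p)
  rw [mul_add, mul_add, pQ, pQ, pQ, pQ]
  ring

lemma Qi_hom (l x y : ℤ) : Qi p (l * x) (l * y) = l ^ p * Qi p x y := by
  apply mul_left_cancel₀ (hp0 p)
  rw [pQ, mul_left_comm, pQ, ← mul_add, mul_pow, mul_pow, mul_pow]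
  ring

/-- ZMod valued version. -/
def qz (x y : ℤ) : ZMod p := ((Qi p x y : ℤ) : ZMod p)

lemma qz_symm (x y : ℤ) : qz p x y = qz p y x := by rw [qz, qz, Qi_symm]

lemma qz_cocycle (x y z : ℤ) :
    qz p x y + qz p (x + y) z = qz p y z + qz p x (y + z) := by
  unfold qz
  rw [← Int.cast_add, ← Int.cast_add, Qi_cocycle]

lemma qz_hom (l x y : ℤ) : qz p (l * x) (l * y) = (l : ZMod p) * qz p x y := by
  unfold qz
  rw [Qi_hom]
  push_cast
  rw [ZMod.pow_card]

lemma qz_congr {x y x' y' : ℤ} (hx : (x : ZMod p) = x') (hy : (y : ZMod p) = y') :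
    qz p x y = qz p x' y' := by
  have hx' : (p : ℤ) ∣ x - x' := by
    rwa [← ZMod.intCast_zmod_eq_zero_iff_dvd, Int.cast_sub, sub_eq_zero]
  have hy' : (p : ℤ) ∣ y - y' := by
    rwa [← ZMod.intCast_zmod_eq_zero_iff_dvd, Int.cast_sub, sub_eq_zero]
  have hxy : (p : ℤ) ∣ (x + y) - (x' + y') := by
    have h := dvd_add hx' hy'; convert h using 1; rfl; ring
  have h1 : ((p : ℤ) ^ 2) ∣ (x + y) ^ p - (x' + y') ^ p := by
    have h := dvd_sub_pow_of_dvd_sub hxy 1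
    simpa [pow_one] using h
  have h2 : ((p : ℤ) ^ 2) ∣ x ^ p - x' ^ p := by
    have h := dvd_sub_pow_of_dvd_sub hx' 1
    simpa [pow_one] using h
  have h3 : ((p : ℤ) ^ 2) ∣ y ^ p - y' ^ p := by
    have h := dvd_sub_pow_of_dvd_sub hy' 1
    simpa [pow_one] using h
  have hD : ((p : ℤ) ^ 2) ∣ ((x + y) ^ p - x ^ p - y ^ p) - ((x' + y') ^ p - x' ^ p - y' ^ p) := by
    have h := dvd_sub (dvd_sub h1 h2) h3
    convert h using 1; rfl; ring
  obtain ⟨k, hk⟩ := hD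
  have hq : Qi p x y - Qi p x' y' = p * k := by
    apply mul_left_cancel₀ (hp0 p)
    rw [mul_sub, pQ, pQ, hk]
    ring
  have hz : ((Qi p x y - Qi p x' y' : ℤ) : ZMod p) = 0 := by
    rw [hq]; push_cast; simp
  unfold qz
  rw [← sub_eq_zero, ← Int.cast_sub, hz]

lemma choose_cast (k : ℕ) (hk : k ≤ p - 1) :
    (((p - 1).choose k : ℕ) : ZMod p) = (-1 : ZMod p) ^ k := by
  induction k with
  | zero => simp
  | succ k ih =>
    have hk' : k ≤ p - 1 := Nat.le_of_succ_le hk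
    have hklt : k + 1 < p := by
      have := hp.out.two_le; omega
    have hdvd : p ∣ p.choose (k + 1) :=
      Nat.Prime.dvd_choose_self hp.out (Nat.succ_ne_zero k) hklt
    have hpascal : p.choose (k + 1) = (p - 1).choose k + (p - 1).choose (k + 1) := by
      have h := Nat.choose_succ_succ (p - 1) k
      have h1 : (p - 1).succ = p := by have := hp.out.two_le; omega
      rwa [h1] at h
    have h0 : ((p.choose (k + 1) : ℕ) : ZMod p) = 0 :=
      (ZMod.natCast_eq_zero_iff _ _).mpr hdvd
    have hcast := congrArg (fun m : ℕ => (m : ZMod p)) hpascal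
    simp only [Nat.cast_add] at hcast
    rw [h0, ih hk'] at hcast
    have hres : (((p - 1).choose (k + 1) : ℕ) : ZMod p) = -(-1 : ZMod p) ^ k := by
      linear_combination -hcast
    rw [hres, pow_succ]
    ring

lemma key (hodd : Odd p) (n : ℤ) :
    mirimanoff p ((n : ℤ) : ZMod p) = qz p n (1 - n) := by
  classical
  set c : ℕ → ℕ := fun j => p.choose j / p with hc
  have hIco : Finset.Ico 1 p = Finset.Icc 1 (p - 1) := by
    rw [← Finset.Ico_add_one_right_eq_Icc]
    congr 1
    have := hp.out.pos; omega
  have hsplit : ((1 : ℤ) - n) ^ p =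
      1 + (∑ k ∈ Finset.Icc 1 (p - 1), (-n) ^ k * (p.choose k : ℤ)) - n ^ p := by
    have hb : ((1 : ℤ) - n) ^ p = ∑ k ∈ Finset.range (p + 1), (-n) ^ k * (p.choose k : ℤ) := by
      rw [sub_eq_add_neg, add_comm, add_pow]
      simp
    rw [hb, Finset.sum_range_succ, Finset.range_eq_Ico,
      Finset.sum_eq_sum_Ico_succ_bot hp.out.pos, hIco]
    have htop : (-n) ^ p * (p.choose p : ℤ) = -n ^ p := by
      rw [Nat.choose_self, hodd.neg_pow]
      push_cast; ring
    rw [htop]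
    simp
    ring
  have hint : Qi p n (1 - n) =
      ∑ j ∈ Finset.Icc 1 (p - 1), (-1 : ℤ) ^ (j + 1) * (c j : ℤ) * n ^ j := by
    apply mul_left_cancel₀ (hp0 p)
    rw [pQ, Finset.mul_sum]
    have hL : n + (1 - n) = (1 : ℤ) := by ring
    rw [hL, one_pow, hsplit]
    have hterm : ∀ j ∈ Finset.Icc 1 (p - 1),
        (p : ℤ) * ((-1 : ℤ) ^ (j + 1) * (c j : ℤ) * n ^ j) = -((-n) ^ j * (p.choose j : ℤ)) := by
      intro j hj
      simp only [Finset.mem_Icc] at hj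
      have hjlt : j < p := by
        have := hp.out.pos; omega
      have hdvd : p ∣ p.choose j := Nat.Prime.dvd_choose_self hp.out (by omega) hjlt
      have hmul : (p : ℤ) * (c j : ℤ) = (p.choose j : ℤ) := by
        exact_mod_cast congrArg (fun m : ℕ => (m : ℤ)) (Nat.mul_div_cancel' hdvd)
      rw [neg_pow n j, pow_succ]
      linear_combination (-(-1 : ℤ) ^ j * n ^ j) * hmul
    rw [Finset.sum_congr rfl hterm, Finset.sum_neg_distrib]
    ring
  unfold qz
  rw [hint]
  push_cast
  unfold mirimanoff
  apply Finset.sum_congr rfl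
  intro j hj
  simp only [Finset.mem_Icc] at hj
  obtain ⟨hj1, hj2⟩ := hj
  have hjlt : j < p := by
    have := hp.out.pos; omega
  have hdvd : p ∣ p.choose j := Nat.Prime.dvd_choose_self hp.out (by omega) hjlt
  have hnat : c j * j = (p - 1).choose (j - 1) := by
    have h1 := Nat.add_one_mul_choose_eq (p - 1) (j - 1)
    have hps : p - 1 + 1 = p := by have := hp.out.two_le; omega
    have hjs : j - 1 + 1 = j := by omega
    rw [hps, hjs] at h1
    have h2 : p.choose j = p * c j := (Nat.mul_div_cancel' hdvd).symm
    rw [h2, mul_assoc] at h1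
    exact (Nat.eq_of_mul_eq_mul_left hp.out.pos h1).symm
  have hj0 : (j : ZMod p) ≠ 0 := by
    rw [Ne, ZMod.natCast_eq_zero_iff]
    exact fun h => absurd (Nat.le_of_dvd (by omega) h) (by omega)
  have hcj : (c j : ZMod p) * (j : ZMod p) = (-1 : ZMod p) ^ (j - 1) := by
    have hcast := congrArg (fun m : ℕ => (m : ZMod p)) hnat
    simp only [Nat.cast_mul] at hcast
    rw [hcast, choose_cast p (j - 1) (by omega)]
  have hcj' : (c j : ZMod p) = (-1 : ZMod p) ^ (j - 1) * (j : ZMod p)⁻¹ := by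
    rw [← hcj, mul_assoc, mul_inv_cancel₀ hj0, mul_one]
  rw [hcj']
  have hpow : (-1 : ZMod p) ^ (j + 1) * (-1 : ZMod p) ^ (j - 1) = 1 := by
    rw [← pow_add]
    have h2j : j + 1 + (j - 1) = 2 * j := by omega
    rw [h2j, pow_mul]
    norm_num
  linear_combination (-((j : ZMod p))⁻¹ * ((n : ZMod p)) ^ j) * hpow

end MirAux

theorem mirimanoff_cocycle_relation (p : ℕ) [hp : Fact p.Prime] (hodd : Odd p)
    (a b : ZMod p) (ha0 : a ≠ 0) (ha1 : a ≠ 1) (hb0 : b ≠ 0) (hb1 : b ≠ 1)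
    (hab0 : a * b ≠ 0) (hab1 : a * b ≠ 1) :
    (1 - a * b) * mirimanoff p ((1 - b) / (1 - a * b)) + (1 - b) * mirimanoff p a =
    (1 - a * b) * mirimanoff p ((1 - a) / (1 - a * b)) + (1 - a) * mirimanoff p b := by
  classical
  obtain ⟨A, rfl⟩ := ZMod.intCast_surjective a
  obtain ⟨B, rfl⟩ := ZMod.intCast_surjective b
  have hab : (1 : ZMod p) - (A : ZMod p) * (B : ZMod p) ≠ 0 := by
    intro h; apply hab1; linear_combination -h
  obtain ⟨U, hU⟩ := ZMod.intCast_surjective ((1 - (B : ZMod p)) / (1 - (A : ZMod p) * (B : ZMod p)))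
  obtain ⟨V, hV⟩ := ZMod.intCast_surjective ((1 - (A : ZMod p)) / (1 - (A : ZMod p) * (B : ZMod p)))
  rw [← hU, ← hV, MirAux.key p hodd A, MirAux.key p hodd B, MirAux.key p hodd U,
    MirAux.key p hodd V]
  have e1 : (1 - (A : ZMod p) * (B : ZMod p)) * MirAux.qz p U (1 - U)
      = MirAux.qz p (1 - B) (B * (1 - A)) := by
    have hl : (((1 - A * B : ℤ)) : ZMod p) = 1 - (A : ZMod p) * (B : ZMod p) := by push_cast; ring
    rw [← hl, ← MirAux.qz_hom]
    apply MirAux.qz_congr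
    · push_cast
      rw [hU]
      field_simp
    · push_cast
      rw [hU]
      field_simp
      ring
  have e2 : (1 - (B : ZMod p)) * MirAux.qz p A (1 - A)
      = MirAux.qz p (A * (1 - B)) ((1 - A) * (1 - B)) := by
    have hl : (((1 - B : ℤ)) : ZMod p) = 1 - (B : ZMod p) := by push_cast; ring
    rw [← hl, ← MirAux.qz_hom]
    apply MirAux.qz_congr <;> (push_cast; ring)
  have e3 : (1 - (A : ZMod p) * (B : ZMod p)) * MirAux.qz p V (1 - V)
      = MirAux.qz p (1 - A) (A * (1 - B)) := by
    have hl : (((1 - A * B : ℤ)) : ZMod p) = 1 - (A : ZMod p) * (B : ZMod p) := by push_cast; ring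
    rw [← hl, ← MirAux.qz_hom]
    apply MirAux.qz_congr
    · push_cast
      rw [hV]
      field_simp
    · push_cast
      rw [hV]
      field_simp
      ring
  have e4 : (1 - (A : ZMod p)) * MirAux.qz p B (1 - B)
      = MirAux.qz p (B * (1 - A)) ((1 - A) * (1 - B)) := by
    have hl : (((1 - A : ℤ)) : ZMod p) = 1 - (A : ZMod p) := by push_cast; ring
    rw [← hl, ← MirAux.qz_hom]
    apply MirAux.qz_congr <;> (push_cast; ring)
  rw [e1, e2, e3, e4]
  have hc := MirAux.qz_cocycle p (A * (1 - B)) ((1 - A) * (1 - B)) (B * (1 - A))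
  have hxy : A * (1 - B) + (1 - A) * (1 - B) = 1 - B := by ring
  have hyz : (1 - A) * (1 - B) + B * (1 - A) = 1 - A := by ring
  rw [hxy, hyz] at hc
  rw [MirAux.qz_symm p ((1 - A) * (1 - B)) (B * (1 - A)),
      MirAux.qz_symm p (A * (1 - B)) (1 - A)] at hc
  linear_combination hc
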